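/- Let n ≥ 2 and 1 ≤ p ≤ n−1. For variables x₁,…,x_n and any exponents m₁,…,m_p ≥ 0, one has ∑_{ε∈{±1}ⁿ, ∏ε_i=1} ∏_{j=1}^{p}(ε₁x₁^{m_j}+⋯+ε_nx_n^{m_j}) = ∑_{ε∈{±1}ⁿ, ∏ε_i=−1} ∏_{j=1}^{p}(ε₁x₁^{m_j}+⋯+ε_nx_n^{m_j}) in ℤ[x₁,…,x_n]. -/
import Mathlib


open MvPolynomial in
theorem stmt_6 (n : ℕ) (hn : 2 ≤ n) (p : ℕ) (hp1 : 1 ≤ p) (hp2 : p ≤ n - 1)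
    (m : Fin p → ℕ) :
    ∑ ε ∈ Finset.univ.filter (fun ε : Fin n → ℤˣ => ∏ i, ε i = 1),
        ∏ j, (∑ i, ((ε i : ℤ) • (X i : MvPolynomial (Fin n) ℤ) ^ (m j)))
      = ∑ ε ∈ Finset.univ.filter (fun ε : Fin n → ℤˣ => ∏ i, ε i = -1),
        ∏ j, (∑ i, ((ε i : ℤ) • (X i : MvPolynomial (Fin n) ℤ) ^ (m j))) := by
  classical
  have hpn : p < n := lt_of_le_of_lt hp2 (Nat.sub_lt (by omega) one_pos)
  have expand : ∀ ε : Fin n → ℤˣ,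
      ∏ j, (∑ i, ((ε i : ℤ) • (X i : MvPolynomial (Fin n) ℤ) ^ (m j)))
      = ∑ f ∈ Fintype.piFinset (fun _ : Fin p => (Finset.univ : Finset (Fin n))),
          ((∏ j, (ε (f j) : ℤ)) • ∏ j, (X (f j) : MvPolynomial (Fin n) ℤ) ^ (m j)) := by
    intro ε
    rw [Finset.prod_univ_sum]
    refine Finset.sum_congr rfl fun f _ => ?_
    simp only [zsmul_eq_mul, Finset.prod_mul_distrib]
    push_cast
    ring
  simp only [expand]
  rw [Finset.sum_comm (s := Finset.univ.filter (fun ε : Fin n → ℤˣ => ∏ i, ε i = 1)),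
      Finset.sum_comm (s := Finset.univ.filter (fun ε : Fin n → ℤˣ => ∏ i, ε i = -1))]
  refine Finset.sum_congr rfl fun f _ => ?_
  rw [← Finset.sum_smul, ← Finset.sum_smul]
  congr 1
  -- find an index not hit by f
  obtain ⟨i₀, hi₀⟩ : ∃ i₀ : Fin n, ∀ j, f j ≠ i₀ := by
    by_contra h
    push_neg at h
    have : (Finset.univ : Finset (Fin n)) ⊆ Finset.univ.image f := by
      intro i _
      obtain ⟨j, hj⟩ := h i
      exact Finset.mem_image.2 ⟨j, Finset.mem_univ j, hj⟩
    have hcard := Finset.card_le_card this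
    have := Finset.card_image_le (s := (Finset.univ : Finset (Fin p))) (f := f)
    simp [Finset.card_univ] at hcard this
    omega
  refine Finset.sum_nbij' (fun ε => Function.update ε i₀ (-ε i₀))
    (fun ε => Function.update ε i₀ (-ε i₀)) ?_ ?_ ?_ ?_ ?_
  · intro ε hε
    simp only [Finset.mem_filter, Finset.mem_univ, true_and] at hε ⊢
    rw [Finset.prod_update_of_mem (Finset.mem_univ i₀), Finset.sdiff_singleton_eq_erase]
    rw [← Finset.prod_erase_mul _ _ (Finset.mem_univ i₀)] at hε
    rw [neg_mul, mul_comm, hε]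
  · intro ε hε
    simp only [Finset.mem_filter, Finset.mem_univ, true_and] at hε ⊢
    rw [Finset.prod_update_of_mem (Finset.mem_univ i₀), Finset.sdiff_singleton_eq_erase]
    rw [← Finset.prod_erase_mul _ _ (Finset.mem_univ i₀)] at hε
    rw [neg_mul, mul_comm, hε, neg_neg]
  · intro ε _
    funext i
    by_cases h : i = i₀
    · subst h; simp
    · simp [Function.update_of_ne h]
  · intro ε _
    funext i
    by_cases h : i = i₀
    · subst h; simp
    · simp [Function.update_of_ne h]
  · intro ε _
    refine Finset.prod_congr rfl fun j _ => ?_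
    simp [Function.update_of_ne (hi₀ j)]
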